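/- arXiv:1602.02524 — 3 statements merged into one kernel-verified Lean document; each statement's English description precedes it below -/
import Mathlib

section
/- The Lyapunov equation A X + X Aᵀ + Q = 0 (in n×n real matrices) has a unique solution X if and only if A has no two eigenvalues λᵢ, λⱼ (possibly with i = j) satisfying λᵢ = -λⱼ. -/
open Matrix

/-- `A` is Sylvester: no two complex eigenvalues `λᵢ, λⱼ` (possibly `i = j`)
satisfy `λᵢ = -λⱼ`. -/
def IsSylvester {n : ℕ} (A : Matrix (Fin n) (Fin n) ℝ) : Prop :=
  ∀ μ ∈ spectrum ℂ (A.map (Complex.ofReal)),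
    ∀ ν ∈ spectrum ℂ (A.map (Complex.ofReal)), μ ≠ -ν


section Aux

open Polynomial

variable {n : ℕ}

lemma eval_charpoly' (M : Matrix (Fin n) (Fin n) ℂ) (μ : ℂ) :
    (M.charpoly).eval μ = (μ • (1 : Matrix (Fin n) (Fin n) ℂ) - M).det := by
  rw [Matrix.charpoly, ← Polynomial.coe_evalRingHom, RingHom.map_det]
  congr 1
  ext i j
  by_cases h : i = j <;>
    simp [charmatrix_apply, h, Matrix.one_apply, Matrix.diagonal_apply]

lemma mem_spectrum_iff_det (M : Matrix (Fin n) (Fin n) ℂ) (μ : ℂ) :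
    μ ∈ spectrum ℂ M ↔ (μ • (1 : Matrix (Fin n) (Fin n) ℂ) - M).det = 0 := by
  rw [spectrum.mem_iff, Algebra.algebraMap_eq_smul_one]
  rw [← not_iff_comm, Matrix.isUnit_iff_isUnit_det, isUnit_iff_ne_zero]

lemma root_iff_spectrum (M : Matrix (Fin n) (Fin n) ℂ) (μ : ℂ) :
    M.charpoly.IsRoot μ ↔ μ ∈ spectrum ℂ M := by
  rw [IsRoot, eval_charpoly', mem_spectrum_iff_det]

lemma spectrum_transpose' (M : Matrix (Fin n) (Fin n) ℂ) :
    spectrum ℂ Mᵀ = spectrum ℂ M := by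
  ext μ
  rw [mem_spectrum_iff_det, mem_spectrum_iff_det, ← Matrix.det_transpose (μ • 1 - M)]
  congr! 2
  rw [Matrix.transpose_sub, Matrix.transpose_smul, Matrix.transpose_one]

lemma mem_spectrum_neg_iff (M : Matrix (Fin n) (Fin n) ℂ) (μ : ℂ) :
    μ ∈ spectrum ℂ (-M) ↔ -μ ∈ spectrum ℂ M := by
  rw [mem_spectrum_iff_det, mem_spectrum_iff_det]
  have : μ • (1 : Matrix (Fin n) (Fin n) ℂ) - -M = -((-μ) • 1 - M) := by
    rw [neg_sub, neg_smul, sub_neg_eq_add]; abel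
  rw [this, Matrix.det_neg]
  simp [mul_eq_zero, pow_eq_zero_iff']

lemma aeval_intertwine (A B X : Matrix (Fin n) (Fin n) ℂ) (h : A * X = X * B)
    (p : ℂ[X]) : (aeval A p) * X = X * (aeval B p) := by
  induction p using Polynomial.induction_on with
  | C a => simp [Algebra.algebraMap_eq_smul_one, smul_mul_assoc, mul_smul_comm]
  | add p q hp hq => simp [map_add, add_mul, mul_add, hp, hq]
  | monomial k a _ =>
      have hpow : ∀ m : ℕ, A ^ m * X = X * B ^ m := by
        intro m
        induction m with
        | zero => simp
        | succ m ih => rw [pow_succ, pow_succ, mul_assoc, h, ← mul_assoc, ih, mul_assoc]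
      simp only [_root_.map_mul, map_pow, aeval_C, aeval_X,
        Algebra.algebraMap_eq_smul_one, smul_mul_assoc, one_mul, mul_smul_comm]
      rw [hpow]

lemma intertwine_eq_zero (A B X : Matrix (Fin n) (Fin n) ℂ)
    (hd : ∀ μ ∈ spectrum ℂ B, μ ∉ spectrum ℂ A)
    (h : A * X = X * B) : X = 0 := by
  set p := B.charpoly with hp
  have hkey : (aeval A p) * X = 0 := by
    rw [aeval_intertwine A B X h p, hp, Matrix.aeval_self_charpoly, mul_zero]
  have hmonic : p.Monic := B.charpoly_monic
  have hsplit : p = (p.roots.map fun r => Polynomial.X - C r).prod :=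
    (Splits.eq_prod_roots_of_monic (IsAlgClosed.splits p) hmonic)
  have hunit : IsUnit (aeval A p) := by
    rw [show aeval A p = aeval A ((p.roots.map fun r => Polynomial.X - C r).prod) from by rw [← hsplit]]
    rw [← Multiset.prod_toList, map_list_prod]
    apply List.prod_isUnit
    intro u hu
    simp only [List.mem_map, Multiset.mem_toList, Multiset.mem_map] at hu
    obtain ⟨q, ⟨r, hr, rfl⟩, rfl⟩ := hu
    have hrB : r ∈ spectrum ℂ B := (root_iff_spectrum B r).mp (isRoot_of_mem_roots hr)
    have hrA : r ∉ spectrum ℂ A := hd r hrB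
    rw [spectrum.mem_iff, not_not] at hrA
    simpa [Algebra.algebraMap_eq_smul_one, map_sub, aeval_X, aeval_C] using hrA.neg
  exact hunit.mul_left_cancel (by rw [hkey, mul_zero])

lemma exists_eigenvector (M : Matrix (Fin n) (Fin n) ℂ) (μ : ℂ)
    (hμ : μ ∈ spectrum ℂ M) : ∃ v : Fin n → ℂ, v ≠ 0 ∧ M *ᵥ v = μ • v := by
  rw [mem_spectrum_iff_det] at hμ
  obtain ⟨v, hv, hv0⟩ := (Matrix.exists_mulVec_eq_zero_iff.mpr hμ)
  refine ⟨v, hv, ?_⟩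
  have := hv0
  rw [Matrix.sub_mulVec, sub_eq_zero, Matrix.smul_mulVec, Matrix.one_mulVec] at this
  exact this.symm

/-- If `A` is not Sylvester, there is a nonzero complex matrix in the kernel
of the complex Sylvester operator. -/
lemma exists_complex_kernel (A : Matrix (Fin n) (Fin n) ℝ)
    (h : ¬ IsSylvester A) :
    ∃ Xc : Matrix (Fin n) (Fin n) ℂ, Xc ≠ 0 ∧
      (A.map Complex.ofReal) * Xc + Xc * (A.map Complex.ofReal)ᵀ = 0 := by
  simp only [IsSylvester, not_forall, not_ne_iff] at h
  obtain ⟨μ, hμ, ν, hν, hμν⟩ := h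
  set A' := A.map (Complex.ofReal) with hA'
  obtain ⟨u, hu, huA⟩ := exists_eigenvector A' μ hμ
  obtain ⟨v, hv, hvA⟩ := exists_eigenvector A' ν hν
  refine ⟨vecMulVec u v, ?_, ?_⟩
  · intro h0
    obtain ⟨i, hi⟩ := Function.ne_iff.mp hu
    obtain ⟨j, hj⟩ := Function.ne_iff.mp hv
    have := congrFun (congrFun h0 i) j
    simp [vecMulVec_apply] at this
    tauto
  · have h1 : A' * vecMulVec u v = μ • vecMulVec u v := by
      ext i j
      simp only [mul_apply, vecMulVec_apply, Matrix.smul_apply, smul_eq_mul]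
      have : ∑ k, A' i k * (u k * v j) = (∑ k, A' i k * u k) * v j := by
        rw [Finset.sum_mul]; congr 1; ext k; ring
      rw [this, show (∑ k, A' i k * u k) = (A' *ᵥ u) i from rfl, huA]
      simp [mul_assoc]
    have h2 : vecMulVec u v * A'ᵀ = ν • vecMulVec u v := by
      ext i j
      simp only [mul_apply, vecMulVec_apply, Matrix.smul_apply, smul_eq_mul, transpose_apply]
      have : ∑ k, u i * v k * A' j k = u i * ∑ k, A' j k * v k := by
        rw [Finset.mul_sum]; congr 1; ext k; ring
      rw [this, show (∑ k, A' j k * v k) = (A' *ᵥ v) j from rfl, hvA]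
      simp; ring
    rw [h1, h2, hμν, ← add_smul, neg_add_cancel, zero_smul]

lemma re_kernel (A : Matrix (Fin n) (Fin n) ℝ) (Xc : Matrix (Fin n) (Fin n) ℂ)
    (h : (A.map Complex.ofReal) * Xc + Xc * (A.map Complex.ofReal)ᵀ = 0) :
    A * (Xc.map Complex.re) + (Xc.map Complex.re) * Aᵀ = 0 := by
  ext i j
  have h' := congrFun (congrFun h i) j
  simp only [Matrix.add_apply, mul_apply, map_apply, transpose_apply, Matrix.zero_apply] at h' ⊢
  have := congrArg Complex.re h'
  simp only [Complex.add_re, Complex.re_sum, Complex.zero_re] at this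
  convert this using 2
  · congr 1; ext k; rw [Complex.re_ofReal_mul]
  · congr 1; ext k
    simp [Complex.mul_re, mul_comm]

lemma exists_real_kernel (A : Matrix (Fin n) (Fin n) ℝ) (h : ¬ IsSylvester A) :
    ∃ Y : Matrix (Fin n) (Fin n) ℝ, Y ≠ 0 ∧ A * Y + Y * Aᵀ = 0 := by
  obtain ⟨Xc, hXc, hker⟩ := exists_complex_kernel A h
  obtain ⟨i, hi⟩ := Function.ne_iff.mp hXc
  obtain ⟨j, hj⟩ := Function.ne_iff.mp hi
  simp only [Matrix.zero_apply] at hj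
  have hj' : (Xc i j).re ≠ 0 ∨ (Xc i j).im ≠ 0 := by
    by_contra hc
    push_neg at hc
    exact hj (Complex.ext hc.1 hc.2)
  rcases hj' with hre | him
  · refine ⟨Xc.map Complex.re, ?_, re_kernel A Xc hker⟩
    intro h0
    exact hre (by simpa using congrFun (congrFun h0 i) j)
  · set Yc := (-Complex.I) • Xc with hYc
    have hker' : (A.map Complex.ofReal) * Yc + Yc * (A.map Complex.ofReal)ᵀ = 0 := by
      rw [hYc, mul_smul_comm, smul_mul_assoc, ← smul_add, hker, smul_zero]
    refine ⟨Yc.map Complex.re, ?_, re_kernel A Yc hker'⟩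
    intro h0
    have : (Yc i j).re = 0 := by simpa using congrFun (congrFun h0 i) j
    rw [hYc] at this
    simp [Complex.neg_re, Complex.mul_re] at this
    exact him this

/-- The Lyapunov/Sylvester operator as a linear map. -/
def lyapOp (A : Matrix (Fin n) (Fin n) ℝ) :
    Matrix (Fin n) (Fin n) ℝ →ₗ[ℝ] Matrix (Fin n) (Fin n) ℝ where
  toFun X := A * X + X * Aᵀ
  map_add' X Y := by rw [mul_add, add_mul]; abel
  map_smul' c X := by simp [mul_smul_comm, smul_mul_assoc, smul_add]

end Aux

theorem lyapunov_existsUnique_iff_sylvester {n : ℕ}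
    (A Q : Matrix (Fin n) (Fin n) ℝ) :
    (∃! X : Matrix (Fin n) (Fin n) ℝ, A * X + X * Aᵀ + Q = 0) ↔ IsSylvester A := by
  constructor
  · intro hEU
    by_contra hns
    obtain ⟨Y, hY0, hY⟩ := exists_real_kernel A hns
    obtain ⟨X₀, hX₀, huniq⟩ := hEU
    have hsol : A * (X₀ + Y) + (X₀ + Y) * Aᵀ + Q = 0 := by
      have : A * (X₀ + Y) + (X₀ + Y) * Aᵀ + Q
          = (A * X₀ + X₀ * Aᵀ + Q) + (A * Y + Y * Aᵀ) := by
        rw [mul_add, add_mul]; abel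
      rw [this, hX₀, hY, add_zero]
    have := huniq (X₀ + Y) hsol
    exact hY0 (by simpa using congrArg (· - X₀) this)
  · intro hS
    have hinj : Function.Injective (lyapOp A) := by
      rw [injective_iff_map_eq_zero]
      intro X hX
      have hX' : A * X + X * Aᵀ = 0 := hX
      set A' := A.map (Complex.ofReal) with hA'
      have hc : A' * (X.map Complex.ofReal) = (X.map Complex.ofReal) * (-A'ᵀ) := by
        have h0 : Complex.ofRealHom.mapMatrix (A * X + X * Aᵀ) = 0 := by
          rw [hX', map_zero]
        rw [map_add, _root_.map_mul, _root_.map_mul] at h0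
        simp only [RingHom.mapMatrix_apply, Complex.ofRealHom_eq_coe] at h0
        rw [Matrix.transpose_map] at h0
        simp only [show ⇑Complex.ofRealHom = Complex.ofReal from rfl] at h0
        rw [mul_neg, eq_neg_of_add_eq_zero_left h0]
      have hd : ∀ μ ∈ spectrum ℂ (-A'ᵀ), μ ∉ spectrum ℂ A' := by
        intro μ hμ hμA
        rw [mem_spectrum_neg_iff, spectrum_transpose'] at hμ
        exact hS μ hμA (-μ) hμ (neg_neg μ).symm
      have := intertwine_eq_zero A' (-A'ᵀ) (X.map Complex.ofReal) hd hc
      ext i j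
      have := congrFun (congrFun this i) j
      simpa using this
    obtain ⟨X, hX⟩ := (LinearMap.injective_iff_surjective.mp hinj) (-Q)
    refine ⟨X, ?_, ?_⟩
    · show A * X + X * Aᵀ + Q = 0
      have : A * X + X * Aᵀ = -Q := hX
      rw [this, neg_add_cancel]
    · intro Y hY
      apply hinj
      show A * Y + Y * Aᵀ = lyapOp A X
      rw [hX]
      exact eq_neg_of_add_eq_zero_left hY
end

section
/- If A is Sylvester and X^Q is the unique solution of A X^Q + X^Q Aᵀ + Q = 0, then for all t₁ ≤ t₂, ∫_{t₁}^{t₂} e^{A t} Q e^{Aᵀ t} dt = e^{A t₁} X^Q e^{Aᵀ t₁} - e^{A t₂} X^Q e^{Aᵀ t₂}. -/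
open Matrix MeasureTheory

/-- `A` is stable (Hurwitz): every complex eigenvalue has negative real part. -/
def IsStableMatrix {n : ℕ} (A : Matrix (Fin n) (Fin n) ℝ) : Prop :=
  ∀ μ ∈ spectrum ℂ (A.map (Complex.ofReal)), μ.re < 0

/-- The matrix exponential `e^{tA}`. -/
noncomputable def mexp {n : ℕ} (A : Matrix (Fin n) (Fin n) ℝ) (t : ℝ) :
    Matrix (Fin n) (Fin n) ℝ :=
  NormedSpace.exp (t • A)

section aux
variable {n : ℕ}
attribute [local instance] Matrix.linftyOpNormedRing Matrix.linftyOpNormedAlgebra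

/-- Entry evaluation as a continuous linear map (w.r.t. the `L∞`-operator norm). -/
noncomputable def entryCLM (i j : Fin n) : Matrix (Fin n) (Fin n) ℝ →L[ℝ] ℝ :=
  LinearMap.toContinuousLinearMap
    ((LinearMap.proj j).comp ((LinearMap.proj i).comp (Matrix.ofLinearEquiv ℝ).symm.toLinearMap))

lemma key {n : ℕ} (A Q X : Matrix (Fin n) (Fin n) ℝ)
    (hX : A * X + X * Aᵀ + Q = 0) (t : ℝ) (i j : Fin n) :
    HasDerivAt (fun t => (mexp A t * X * mexp Aᵀ t) i j)
      (-((mexp A t * Q * mexp Aᵀ t) i j)) t := by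
  have h1 := hasDerivAt_exp_smul_const (𝕂 := ℝ) A t
  have h2 := hasDerivAt_exp_smul_const (𝕂 := ℝ) Aᵀ t
  have hm : HasDerivAt (fun t => mexp A t * X * mexp Aᵀ t)
      (mexp A t * A * X * mexp Aᵀ t + mexp A t * X * (mexp Aᵀ t * Aᵀ)) t := by
    have h3 := ((h1.mul_const X).mul h2)
    simp only [mexp, mul_assoc, Pi.mul_def] at h3 ⊢
    exact h3
  have hcomm : mexp Aᵀ t * Aᵀ = Aᵀ * mexp Aᵀ t := by
    have : Commute (t • Aᵀ) Aᵀ := (Commute.refl Aᵀ).smul_left t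
    simpa [mexp] using this.exp_left.eq
  have hcomm2 : mexp A t * A = A * mexp A t := by
    have : Commute (t • A) A := (Commute.refl A).smul_left t
    simpa [mexp] using this.exp_left.eq
  have hQ : A * X + X * Aᵀ = -Q := by
    rw [eq_neg_iff_add_eq_zero]; exact hX
  have heq : mexp A t * A * X * mexp Aᵀ t + mexp A t * X * (mexp Aᵀ t * Aᵀ)
      = -(mexp A t * Q * mexp Aᵀ t) := by
    rw [hcomm, hcomm2]
    have : A * mexp A t * X * mexp Aᵀ t + mexp A t * X * (Aᵀ * mexp Aᵀ t)
        = mexp A t * (A * X + X * Aᵀ) * mexp Aᵀ t := by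
      rw [← hcomm2]; noncomm_ring
    rw [this, hQ]; noncomm_ring
  rw [heq] at hm
  have := (entryCLM i j).hasFDerivAt.comp_hasDerivAt t hm
  exact this

lemma cont_entry {n : ℕ} (A Q : Matrix (Fin n) (Fin n) ℝ) (i j : Fin n) :
    Continuous (fun t => (mexp A t * Q * mexp Aᵀ t) i j) := by
  have h1 : Continuous (fun t : ℝ => mexp A t) :=
    NormedSpace.exp_continuous.comp (continuous_id.smul continuous_const)
  have h2 : Continuous (fun t : ℝ => mexp Aᵀ t) :=
    NormedSpace.exp_continuous.comp (continuous_id.smul continuous_const)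
  exact ((entryCLM i j).continuous).comp (((h1.mul continuous_const).mul h2))
end aux

theorem finite_integral_eq_lyapunov_solution {n : ℕ}
    (A Q X : Matrix (Fin n) (Fin n) ℝ) (hA : IsSylvester A)
    (hX : A * X + X * Aᵀ + Q = 0) (t₁ t₂ : ℝ) (h : t₁ ≤ t₂) :
    (Matrix.of fun i j => ∫ t in t₁..t₂, (mexp A t * Q * mexp Aᵀ t) i j)
      = mexp A t₁ * X * mexp Aᵀ t₁ - mexp A t₂ * X * mexp Aᵀ t₂ := by
  ext i j
  have := intervalIntegral.integral_eq_sub_of_hasDerivAt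
    (f := fun t => (mexp A t * X * mexp Aᵀ t) i j)
    (f' := fun t => -((mexp A t * Q * mexp Aᵀ t) i j))
    (fun t _ => key A Q X hX t i j)
    (((cont_entry A Q i j).neg).intervalIntegrable t₁ t₂)
  simp only [intervalIntegral.integral_neg] at this
  simp only [Matrix.of_apply, Matrix.sub_apply]
  linarith [this]
end

section
/- Let A be Sylvester, let F, G be n×n matrices with A F = F A and Aᵀ G = G Aᵀ. Let X^V solve A X^V + X^V Aᵀ + V = 0 and let X̄^Q solve Aᵀ X̄^Q + X̄^Q A + Q = 0. Then tr(Q F X^V G) = tr(X̄^Q F V G). -/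
open Matrix MeasureTheory

theorem trace_interchange_lyapunov {n : ℕ}
    (A F G Q V XV XbarQ : Matrix (Fin n) (Fin n) ℝ) (hA : IsSylvester A)
    (hF : A * F = F * A) (hG : Aᵀ * G = G * Aᵀ)
    (hXV : A * XV + XV * Aᵀ + V = 0)
    (hXbarQ : Aᵀ * XbarQ + XbarQ * A + Q = 0) :
    (Q * F * XV * G).trace = (XbarQ * F * V * G).trace := by
  have hQ : Q = -(Aᵀ * XbarQ + XbarQ * A) := eq_neg_of_add_eq_zero_right hXbarQ
  have hV : V = -(A * XV + XV * Aᵀ) := eq_neg_of_add_eq_zero_right hXV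
  subst hQ hV
  have e1 : (Aᵀ * XbarQ * F * XV * G).trace = (XbarQ * F * XV * Aᵀ * G).trace := by
    have : Aᵀ * XbarQ * F * XV * G = Aᵀ * (XbarQ * F * XV * G) := by
      simp [mul_assoc]
    rw [this, Matrix.trace_mul_comm]
    have : XbarQ * F * XV * G * Aᵀ = XbarQ * F * XV * (G * Aᵀ) := by
      simp [mul_assoc]
    rw [this, ← hG]
    simp [mul_assoc]
  have e2 : (XbarQ * A * F * XV * G).trace = (XbarQ * F * A * XV * G).trace := by
    rw [mul_assoc XbarQ A F, hF, ← mul_assoc]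
  simp only [Matrix.neg_mul, Matrix.mul_neg, Matrix.add_mul, Matrix.mul_add,
    trace_neg, trace_add, neg_add]
  rw [e1]
  rw [show XbarQ * F * (A * XV) * G = XbarQ * F * A * XV * G from by simp [mul_assoc]]
  rw [show XbarQ * F * (XV * Aᵀ) * G = XbarQ * F * XV * Aᵀ * G from by simp [mul_assoc]]
  rw [e2]
  ring
end
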